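/- arXiv:1806.01073 — 4 statements merged into one kernel-verified Lean document; each statement's English description precedes it below -/
import Mathlib

section
/- Let p ∈ M_n(ℂ) be positive semidefinite and define the linear map M_p : M_n(ℂ) → M_n(ℂ) by M_p(h) = ∫₀¹ p^α h p^{1−α} dα. Then ‖M_p(h)‖_F ≤ ‖p‖_op · ‖h‖_F for every h ∈ M_n(ℂ), and the operator norm of M_p with respect to the Frobenius norm equals ‖p‖_op. -/
open Matrix MeasureTheory
open scoped ComplexOrder

attribute [local instance] Matrix.frobeniusNormedAddCommGroup Matrix.frobeniusNormedSpace

/-- Functional calculus for a matrix: apply `f : ℝ → ℝ` to a Hermitian matrix `A` via its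
spectral decomposition (junk value `0` if `A` is not Hermitian). -/
noncomputable def hcfc {n : ℕ} (f : ℝ → ℝ) (A : Matrix (Fin n) (Fin n) ℂ) :
    Matrix (Fin n) (Fin n) ℂ :=
  if hA : A.IsHermitian then
    (hA.eigenvectorUnitary : Matrix (Fin n) (Fin n) ℂ) *
      Matrix.diagonal (fun i => (f (hA.eigenvalues i) : ℂ)) *
      star (hA.eigenvectorUnitary : Matrix (Fin n) (Fin n) ℂ)
  else 0

/-- The power `p^α` of a positive semidefinite matrix via functional calculus
(with `p⁰ = 1`, since `x ^ (0:ℝ) = 1` for `Real.rpow`). -/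
noncomputable def psdPow {n : ℕ} (p : Matrix (Fin n) (Fin n) ℂ) (α : ℝ) :
    Matrix (Fin n) (Fin n) ℂ :=
  hcfc (fun x => x ^ α) p

/-- The multiplication operator `M_p(h) = ∫₀¹ p^α h p^{1−α} dα` (Bochner integral). -/
noncomputable def Mop {n : ℕ} (p h : Matrix (Fin n) (Fin n) ℂ) : Matrix (Fin n) (Fin n) ℂ :=
  ∫ α in Set.Icc (0:ℝ) 1, psdPow p α * h * psdPow p (1 - α)

/-- The Frobenius (Hilbert–Schmidt) norm `‖h‖_F = √(tr(h†h))`. -/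
noncomputable def frobNorm {n : ℕ} (h : Matrix (Fin n) (Fin n) ℂ) : ℝ :=
  Real.sqrt ((Matrix.trace (hᴴ * h)).re)

/-- The operator norm of a matrix, acting on the Euclidean space `ℂⁿ`. -/
noncomputable def opNorm {n : ℕ} (h : Matrix (Fin n) (Fin n) ℂ) : ℝ :=
  ‖Matrix.toEuclideanCLM (𝕜 := ℂ) h‖

-- scalar helpers
lemma measurable_const_rpow (l : ℝ) (hl : 0 ≤ l) : Measurable fun α : ℝ => l ^ α := by
  rcases eq_or_lt_of_le hl with h | h
  · have : (fun α : ℝ => l ^ α) = fun α => if α = 0 then 1 else 0 := by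
      funext α
      by_cases hα : α = 0
      · simp [hα, Real.rpow_zero]
      · simp [hα, ← h, Real.zero_rpow hα]
    rw [this]
    exact Measurable.ite (measurableSet_eq) measurable_const measurable_const
  · have : (fun α : ℝ => l ^ α) = fun α => Real.exp (Real.log l * α) := by
      funext α; rw [Real.rpow_def_of_pos h]
    rw [this]
    exact Real.measurable_exp.comp (measurable_const.mul measurable_id)

lemma rpow_le_max (l α : ℝ) (hl : 0 ≤ l) (h0 : 0 ≤ α) (h1 : α ≤ 1) : l ^ α ≤ max 1 l := by
  rcases le_total l 1 with h | h
  · exact le_max_of_le_left (Real.rpow_le_one hl h h0)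
  · refine le_max_of_le_right ?_
    calc l ^ α ≤ l ^ (1:ℝ) := Real.rpow_le_rpow_of_exponent_le h h1
      _ = l := Real.rpow_one l

lemma phi_le {la lb M α : ℝ} (hla : 0 ≤ la) (hlb : 0 ≤ lb) (haM : la ≤ M) (hbM : lb ≤ M)
    (hα : α ∈ Set.Icc (0:ℝ) 1) : la ^ α * lb ^ (1 - α) ≤ M := by
  obtain ⟨h0, h1⟩ := hα
  rcases eq_or_lt_of_le h0 with h | h
  · simp [← h, Real.rpow_zero, Real.rpow_one]; exact hbM
  rcases eq_or_lt_of_le h1 with h1' | h1'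
  · simp [h1', Real.rpow_zero, Real.rpow_one]; exact haM
  have hM : 0 ≤ M := le_trans hla haM
  rcases eq_or_lt_of_le hM with hM0 | hM0
  · have hla0 : la = 0 := le_antisymm (hM0 ▸ haM) hla
    rw [hla0, Real.zero_rpow (ne_of_gt h), zero_mul]; exact hM
  · calc la ^ α * lb ^ (1 - α) ≤ M ^ α * M ^ (1 - α) :=
        mul_le_mul (Real.rpow_le_rpow hla haM h0) (Real.rpow_le_rpow hlb hbM (by linarith))
          (Real.rpow_nonneg hlb _) (Real.rpow_nonneg hM0.le _)
      _ = M ^ (α + (1 - α)) := (Real.rpow_add hM0 _ _).symm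
      _ = M := by norm_num

lemma phi_diag {l α : ℝ} (hl : 0 ≤ l) (hα : α ∈ Set.Icc (0:ℝ) 1) :
    l ^ α * l ^ (1 - α) = l := by
  rcases eq_or_lt_of_le hl with h | h
  · by_cases hα0 : α = 0
    · simp [hα0, ← h, Real.rpow_zero, Real.rpow_one]
    · rw [← h, Real.zero_rpow hα0, zero_mul]
  · rw [← Real.rpow_add h, add_sub_cancel, Real.rpow_one]

lemma int_phi {la lb : ℝ} (hla : 0 ≤ la) (hlb : 0 ≤ lb) :
    IntegrableOn (fun α : ℝ => la ^ α * lb ^ (1 - α)) (Set.Icc 0 1) := by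
  have hm : Measurable fun α : ℝ => la ^ α * lb ^ (1 - α) :=
    (measurable_const_rpow la hla).mul
      ((measurable_const_rpow lb hlb).comp (measurable_const.sub measurable_id))
  refine Integrable.mono' (g := fun _ => max 1 la * max 1 lb)
    (integrableOn_const measure_Icc_lt_top.ne) hm.aestronglyMeasurable ?_
  rw [ae_restrict_iff' measurableSet_Icc]
  filter_upwards with α hα
  obtain ⟨h0, h1⟩ := hα
  rw [Real.norm_eq_abs, abs_of_nonneg (mul_nonneg (Real.rpow_nonneg hla _) (Real.rpow_nonneg hlb _))]
  exact mul_le_mul (rpow_le_max la α hla h0 h1) (rpow_le_max lb _ hlb (by linarith) (by linarith))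
    (Real.rpow_nonneg hlb _) (le_trans zero_le_one (le_max_left _ _))

lemma frobNorm_eq_sqrt_sum {n : ℕ} (M : Matrix (Fin n) (Fin n) ℂ) :
    frobNorm M = Real.sqrt (∑ i, ∑ j, ‖M i j‖^2) := by
  unfold frobNorm
  congr 1
  rw [Matrix.trace]
  simp only [Matrix.diag, Matrix.mul_apply, Matrix.conjTranspose_apply, Complex.re_sum]
  rw [Finset.sum_comm]
  congr 1; funext i; congr 1; funext j
  rw [Complex.sq_norm, Complex.normSq_apply]
  simp [Complex.mul_re]

lemma sum_smul_std {n : ℕ} (x : Fin n → Fin n → ℂ) :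
    ∑ a, ∑ b, x a b • Matrix.single a b (1:ℂ) = Matrix.of x := by
  conv_rhs => rw [Matrix.matrix_eq_sum_single (Matrix.of x)]
  simp [Matrix.smul_single, smul_eq_mul, mul_one]

lemma conj_sum_smul {n : ℕ} (U V : Matrix (Fin n) (Fin n) ℂ) (x : Fin n → Fin n → ℂ) :
    ∑ a, ∑ b, x a b • (U * Matrix.single a b 1 * V) = U * Matrix.of x * V := by
  rw [← sum_smul_std x]
  simp only [Finset.mul_sum, Finset.sum_mul, mul_smul_comm, smul_mul_assoc]

lemma diag_mul_mul_diag {n : ℕ} (d e : Fin n → ℂ) (M : Matrix (Fin n) (Fin n) ℂ) :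
    Matrix.diagonal d * M * Matrix.diagonal e = Matrix.of fun a b => d a * M a b * e b := by
  ext i j
  rw [Matrix.mul_diagonal, Matrix.diagonal_mul]
  rfl

lemma psdPow_eq {n : ℕ} (p : Matrix (Fin n) (Fin n) ℂ) (hp : p.PosSemidef) (α : ℝ) :
    psdPow p α = (hp.1.eigenvectorUnitary : Matrix (Fin n) (Fin n) ℂ) *
      Matrix.diagonal (fun i => ((hp.1.eigenvalues i ^ α : ℝ) : ℂ)) *
      star (hp.1.eigenvectorUnitary : Matrix (Fin n) (Fin n) ℂ) := by
  unfold psdPow hcfc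
  rw [dif_pos hp.1]

lemma integrand_eq {n : ℕ} (p h : Matrix (Fin n) (Fin n) ℂ) (hp : p.PosSemidef) (α : ℝ) :
    psdPow p α * h * psdPow p (1 - α) =
      (hp.1.eigenvectorUnitary : Matrix (Fin n) (Fin n) ℂ) *
        Matrix.of (fun a b => ((hp.1.eigenvalues a ^ α * hp.1.eigenvalues b ^ (1-α) : ℝ) : ℂ) *
          ((star (hp.1.eigenvectorUnitary : Matrix (Fin n) (Fin n) ℂ) * h *
            (hp.1.eigenvectorUnitary : Matrix (Fin n) (Fin n) ℂ)) a b)) *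
        star (hp.1.eigenvectorUnitary : Matrix (Fin n) (Fin n) ℂ) := by
  set U := (hp.1.eigenvectorUnitary : Matrix (Fin n) (Fin n) ℂ) with hU
  rw [psdPow_eq p hp α, psdPow_eq p hp (1-α)]
  have h1 : U * Matrix.diagonal (fun i => ((hp.1.eigenvalues i ^ α : ℝ) : ℂ)) * star U * h *
      (U * Matrix.diagonal (fun i => ((hp.1.eigenvalues i ^ (1-α) : ℝ) : ℂ)) * star U) =
      U * (Matrix.diagonal (fun i => ((hp.1.eigenvalues i ^ α : ℝ) : ℂ)) * (star U * h * U) *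
        Matrix.diagonal (fun i => ((hp.1.eigenvalues i ^ (1-α) : ℝ) : ℂ))) * star U := by
    simp only [mul_assoc]
  rw [h1, diag_mul_mul_diag]
  congr 2
  funext a b
  simp only [Matrix.of_apply]
  push_cast
  ring

lemma integral_cplx_ofReal {μ : Measure ℝ} {f : ℝ → ℝ} :
    ∫ x, ((f x : ℝ) : ℂ) ∂μ = ((∫ x, f x ∂μ : ℝ) : ℂ) :=
  integral_ofReal

lemma Mop_eq {n : ℕ} (p h : Matrix (Fin n) (Fin n) ℂ) (hp : p.PosSemidef) :
    Mop p h = (hp.1.eigenvectorUnitary : Matrix (Fin n) (Fin n) ℂ) *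
      Matrix.of (fun a b =>
        ((∫ α in Set.Icc (0:ℝ) 1, hp.1.eigenvalues a ^ α * hp.1.eigenvalues b ^ (1-α) : ℝ) : ℂ) *
        ((star (hp.1.eigenvectorUnitary : Matrix (Fin n) (Fin n) ℂ) * h *
          (hp.1.eigenvectorUnitary : Matrix (Fin n) (Fin n) ℂ)) a b)) *
      star (hp.1.eigenvectorUnitary : Matrix (Fin n) (Fin n) ℂ) := by
  set U := (hp.1.eigenvectorUnitary : Matrix (Fin n) (Fin n) ℂ) with hUdef
  set k := star U * h * U with hkdef
  set lam := hp.1.eigenvalues with hlamdef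
  have hint : ∀ a b : Fin n,
      Integrable (fun α : ℝ => ((lam a ^ α * lam b ^ (1-α) : ℝ) : ℂ))
        (volume.restrict (Set.Icc (0:ℝ) 1)) := fun a b =>
    (int_phi (hp.eigenvalues_nonneg a) (hp.eigenvalues_nonneg b)).ofReal
  letI : TopologicalSpace (Matrix (Fin n) (Fin n) ℂ) :=
    (Matrix.frobeniusNormedAddCommGroup (m := Fin n) (n := Fin n) (α := ℂ)).toUniformSpace.toTopologicalSpace
  have Fint : ∀ a b : Fin n,
      Integrable (fun α : ℝ => (((lam a ^ α * lam b ^ (1-α) : ℝ) : ℂ) * k a b) •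
        (U * Matrix.single a b 1 * star U)) (volume.restrict (Set.Icc (0:ℝ) 1)) :=
    fun a b => ((hint a b).mul_const (k a b)).smul_const _
  have key : ∀ α : ℝ, psdPow p α * h * psdPow p (1-α) =
      ∑ a, ∑ b, (((lam a ^ α * lam b ^ (1-α) : ℝ) : ℂ) * k a b) •
        (U * Matrix.single a b 1 * star U) := by
    intro α
    rw [integrand_eq p h hp α, ← conj_sum_smul U (star U) _]
  unfold Mop
  simp only [key]
  rw [integral_finset_sum _ (fun a _ => integrable_finset_sum _ (fun b _ => Fint a b))]
  rw [← conj_sum_smul U (star U) (fun a b =>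
    ((∫ α in Set.Icc (0:ℝ) 1, lam a ^ α * lam b ^ (1-α) : ℝ) : ℂ) * k a b)]
  refine Finset.sum_congr rfl (fun a _ => ?_)
  rw [integral_finset_sum _ (fun b _ => Fint a b)]
  refine Finset.sum_congr rfl (fun b _ => ?_)
  rw [integral_smul_const, MeasureTheory.integral_mul_const,
    integral_cplx_ofReal]

lemma frobNorm_conj {n : ℕ} (U M : Matrix (Fin n) (Fin n) ℂ) (hU : star U * U = 1) :
    frobNorm (U * M * star U) = frobNorm M := by
  unfold frobNorm
  congr 2
  rw [← Matrix.star_eq_conjTranspose, ← Matrix.star_eq_conjTranspose]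
  simp only [StarMul.star_mul, star_star]
  have e1 : U * (star M * star U) * (U * M * star U) =
      U * (star M * M) * star U := by
    have h2 : U * (star M * star U) * (U * M * star U) =
        U * (star M * ((star U * U) * (M * star U))) := by
      simp only [mul_assoc]
    rw [h2, hU, one_mul]
    simp only [mul_assoc]
  rw [e1, Matrix.trace_mul_cycle, ← mul_assoc, hU, one_mul]

lemma clm_apply_basis {n : ℕ} (p : Matrix (Fin n) (Fin n) ℂ) (hp : p.PosSemidef) (i : Fin n) :
    Matrix.toEuclideanCLM (𝕜 := ℂ) p (hp.1.eigenvectorBasis i) =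
      ((hp.1.eigenvalues i : ℝ) : ℂ) • hp.1.eigenvectorBasis i := by
  apply (WithLp.equiv 2 ((Fin n) → ℂ)).injective
  rw [WithLp.equiv_apply, WithLp.equiv_apply, Matrix.ofLp_toEuclideanCLM, WithLp.ofLp_smul]
  have := hp.1.mulVec_eigenvectorBasis i
  have h2 : ((hp.1.eigenvalues i : ℝ) : ℂ) • (WithLp.equiv 2 ((Fin n) → ℂ)
      (hp.1.eigenvectorBasis i)) = (hp.1.eigenvalues i : ℝ) •
      (WithLp.equiv 2 ((Fin n) → ℂ) (hp.1.eigenvectorBasis i)) := by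
    funext j
    simp [Complex.real_smul]
  exact this.trans h2.symm

lemma eigenvalue_le_opNorm {n : ℕ} (p : Matrix (Fin n) (Fin n) ℂ) (hp : p.PosSemidef) (i : Fin n) :
    hp.1.eigenvalues i ≤ opNorm p := by
  have hb : ‖hp.1.eigenvectorBasis i‖ = 1 := hp.1.eigenvectorBasis.orthonormal.1 i
  have h1 : ‖Matrix.toEuclideanCLM (𝕜 := ℂ) p (hp.1.eigenvectorBasis i)‖ =
      hp.1.eigenvalues i := by
    rw [clm_apply_basis p hp i, norm_smul, hb, mul_one]
    simp [abs_of_nonneg (hp.eigenvalues_nonneg i)]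
  calc hp.1.eigenvalues i = ‖Matrix.toEuclideanCLM (𝕜 := ℂ) p (hp.1.eigenvectorBasis i)‖ :=
        h1.symm
    _ ≤ opNorm p * ‖hp.1.eigenvectorBasis i‖ :=
        (Matrix.toEuclideanCLM (𝕜 := ℂ) p).le_opNorm _
    _ = opNorm p := by rw [hb, mul_one]

lemma repr_clm {n : ℕ} (p : Matrix (Fin n) (Fin n) ℂ) (hp : p.PosSemidef)
    (x : EuclideanSpace ℂ (Fin n)) (i : Fin n) :
    hp.1.eigenvectorBasis.repr (Matrix.toEuclideanCLM (𝕜 := ℂ) p x) i =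
      ((hp.1.eigenvalues i : ℝ) : ℂ) * hp.1.eigenvectorBasis.repr x i := by
  rw [OrthonormalBasis.repr_apply_apply, OrthonormalBasis.repr_apply_apply]
  have hsa : star (Matrix.toEuclideanCLM (𝕜 := ℂ) p) = Matrix.toEuclideanCLM (𝕜 := ℂ) p := by
    rw [← map_star]
    congr 1
    rw [Matrix.star_eq_conjTranspose]
    exact hp.1
  calc inner ℂ (hp.1.eigenvectorBasis i) (Matrix.toEuclideanCLM (𝕜 := ℂ) p x)
      = inner ℂ (ContinuousLinearMap.adjoint (Matrix.toEuclideanCLM (𝕜 := ℂ) p)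
          (hp.1.eigenvectorBasis i)) x := by
        rw [ContinuousLinearMap.adjoint_inner_left]
    _ = inner ℂ (Matrix.toEuclideanCLM (𝕜 := ℂ) p (hp.1.eigenvectorBasis i)) x := by
        rw [← ContinuousLinearMap.star_eq_adjoint, hsa]
    _ = ((hp.1.eigenvalues i : ℝ) : ℂ) * inner ℂ (hp.1.eigenvectorBasis i) x := by
        rw [clm_apply_basis p hp i, inner_smul_left]
        simp [Complex.conj_ofReal]

lemma opNorm_le_of {n : ℕ} (p : Matrix (Fin n) (Fin n) ℂ) (hp : p.PosSemidef)
    (c : ℝ) (hc : 0 ≤ c) (hall : ∀ i, hp.1.eigenvalues i ≤ c) : opNorm p ≤ c := by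
  refine ContinuousLinearMap.opNorm_le_bound _ hc (fun x => ?_)
  set B := hp.1.eigenvectorBasis
  have h1 : ‖Matrix.toEuclideanCLM (𝕜 := ℂ) p x‖ =
      ‖B.repr (Matrix.toEuclideanCLM (𝕜 := ℂ) p x)‖ := (B.repr.norm_map _).symm
  have h2 : ‖x‖ = ‖B.repr x‖ := (B.repr.norm_map _).symm
  rw [h1, h2, EuclideanSpace.norm_eq, EuclideanSpace.norm_eq]
  have key : ∀ i, ‖B.repr (Matrix.toEuclideanCLM (𝕜 := ℂ) p x) i‖^2 ≤
      c^2 * ‖B.repr x i‖^2 := by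
    intro i
    rw [repr_clm p hp x i, norm_mul, mul_pow]
    gcongr
    rw [Complex.norm_real, Real.norm_eq_abs, abs_of_nonneg (hp.eigenvalues_nonneg i)]
    exact hall i
  calc Real.sqrt (∑ i, ‖B.repr (Matrix.toEuclideanCLM (𝕜 := ℂ) p x) i‖^2)
      ≤ Real.sqrt (∑ i, c^2 * ‖B.repr x i‖^2) :=
        Real.sqrt_le_sqrt (Finset.sum_le_sum (fun i _ => key i))
    _ = c * Real.sqrt (∑ i, ‖B.repr x i‖^2) := by
        rw [← Finset.mul_sum, Real.sqrt_mul (sq_nonneg c), Real.sqrt_sq hc]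

lemma setIntegral_const_Icc01 (c : ℝ) : ∫ _ in Set.Icc (0:ℝ) 1, c = c := by
  rw [setIntegral_const]
  simp [Real.volume_Icc]

lemma frobNorm_std {n : ℕ} (i : Fin n) (z : ℂ) :
    frobNorm (Matrix.single i i z) = ‖z‖ := by
  rw [frobNorm_eq_sqrt_sum]
  have key : ∀ a b : Fin n, ‖Matrix.single i i z a b‖^2 =
      if a = i ∧ b = i then ‖z‖^2 else 0 := by
    intro a b
    by_cases hab : a = i ∧ b = i
    · rw [hab.1, hab.2, if_pos ⟨rfl, rfl⟩, Matrix.single_apply_same]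
    · rw [if_neg hab, Matrix.single_apply_of_ne]
      · simp
      · tauto
  simp only [key, ite_and]
  rw [Finset.sum_comm]
  simp [Finset.sum_ite_eq', Real.sqrt_sq_eq_abs]

theorem Mop_norm_le {n : ℕ} (p : Matrix (Fin n) (Fin n) ℂ) (hp : p.PosSemidef)
    (h : Matrix (Fin n) (Fin n) ℂ) : frobNorm (Mop p h) ≤ opNorm p * frobNorm h := by
  set U := (hp.1.eigenvectorUnitary : Matrix (Fin n) (Fin n) ℂ) with hUdef
  have hU1 : star U * U = 1 := Matrix.mem_unitaryGroup_iff'.mp hp.1.eigenvectorUnitary.2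
  have hU2 : U * star U = 1 := Matrix.mem_unitaryGroup_iff.mp hp.1.eigenvectorUnitary.2
  set k := star U * h * U with hkdef
  set lam := hp.1.eigenvalues with hlamdef
  have hh : h = U * k * star U := by
    have e : U * k * star U = (U * star U) * h * (U * star U) := by
      rw [hkdef]; simp only [mul_assoc]
    rw [e, hU2, one_mul, mul_one]
  have hfrobh : frobNorm h = frobNorm k := by
    conv_lhs => rw [hh]
    rw [frobNorm_conj _ _ hU1]
  rw [Mop_eq p h hp, frobNorm_conj _ _ hU1, hfrobh]
  rw [frobNorm_eq_sqrt_sum, frobNorm_eq_sqrt_sum]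
  have hop : (0:ℝ) ≤ opNorm p := norm_nonneg _
  have key : ∀ a b : Fin n,
      ‖(Matrix.of fun a b =>
        ((∫ α in Set.Icc (0:ℝ) 1, lam a ^ α * lam b ^ (1-α) : ℝ) : ℂ) * k a b) a b‖^2 ≤
      (opNorm p)^2 * ‖k a b‖^2 := by
    intro a b
    rw [Matrix.of_apply, norm_mul, mul_pow]
    gcongr
    rw [Complex.norm_real, Real.norm_eq_abs]
    have h0 : (0:ℝ) ≤ ∫ α in Set.Icc (0:ℝ) 1, lam a ^ α * lam b ^ (1-α) :=
      setIntegral_nonneg measurableSet_Icc (fun α _ =>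
        mul_nonneg (Real.rpow_nonneg (hp.eigenvalues_nonneg a) _)
          (Real.rpow_nonneg (hp.eigenvalues_nonneg b) _))
    rw [abs_of_nonneg h0]
    calc (∫ α in Set.Icc (0:ℝ) 1, lam a ^ α * lam b ^ (1-α))
        ≤ ∫ _ in Set.Icc (0:ℝ) 1, opNorm p :=
          setIntegral_mono_on
            (int_phi (hp.eigenvalues_nonneg a) (hp.eigenvalues_nonneg b))
            (integrableOn_const measure_Icc_lt_top.ne) measurableSet_Icc
            (fun α hα => phi_le (hp.eigenvalues_nonneg a) (hp.eigenvalues_nonneg b)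
              (eigenvalue_le_opNorm p hp a) (eigenvalue_le_opNorm p hp b) hα)
      _ = opNorm p := setIntegral_const_Icc01 _
  calc Real.sqrt (∑ a, ∑ b, ‖(Matrix.of fun a b =>
        ((∫ α in Set.Icc (0:ℝ) 1, lam a ^ α * lam b ^ (1-α) : ℝ) : ℂ) * k a b) a b‖^2)
      ≤ Real.sqrt (∑ a, ∑ b, (opNorm p)^2 * ‖k a b‖^2) :=
        Real.sqrt_le_sqrt (Finset.sum_le_sum (fun a _ =>
          Finset.sum_le_sum (fun b _ => key a b)))
    _ = opNorm p * Real.sqrt (∑ a, ∑ b, ‖k a b‖^2) := by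
        simp only [← Finset.mul_sum]
        rw [Real.sqrt_mul (sq_nonneg _), Real.sqrt_sq hop]

lemma opNorm_le_of_mem {n : ℕ} (p : Matrix (Fin n) (Fin n) ℂ) (hp : p.PosSemidef)
    (c : ℝ) (hc0 : 0 ≤ c)
    (hcall : ∀ h : Matrix (Fin n) (Fin n) ℂ, frobNorm (Mop p h) ≤ c * frobNorm h) :
    opNorm p ≤ c := by
  rcases Nat.eq_zero_or_pos n with hn | hn
  · subst hn
    exact opNorm_le_of p hp c hc0 (fun i => i.elim0)
  haveI : NeZero n := ⟨hn.ne'⟩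
  set U := (hp.1.eigenvectorUnitary : Matrix (Fin n) (Fin n) ℂ) with hUdef
  have hU1 : star U * U = 1 := Matrix.mem_unitaryGroup_iff'.mp hp.1.eigenvectorUnitary.2
  have hU2 : U * star U = 1 := Matrix.mem_unitaryGroup_iff.mp hp.1.eigenvectorUnitary.2
  set lam := hp.1.eigenvalues with hlamdef
  obtain ⟨i0, hi0⟩ := Finite.exists_max lam
  set h0 := U * Matrix.single i0 i0 (1:ℂ) * star U with hh0def
  have hk0 : star U * h0 * U = Matrix.single i0 i0 (1:ℂ) := by
    have e : star U * h0 * U =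
        (star U * U) * Matrix.single i0 i0 (1:ℂ) * (star U * U) := by
      rw [hh0def]; simp only [mul_assoc]
    rw [e, hU1, one_mul, mul_one]
  have hci0 : (∫ α in Set.Icc (0:ℝ) 1, lam i0 ^ α * lam i0 ^ (1-α)) = lam i0 := by
    rw [setIntegral_congr_fun measurableSet_Icc
      (fun α hα => phi_diag (hp.eigenvalues_nonneg i0) hα)]
    exact setIntegral_const_Icc01 _
  have hmat : (Matrix.of fun a b =>
      ((∫ α in Set.Icc (0:ℝ) 1, lam a ^ α * lam b ^ (1-α) : ℝ) : ℂ) *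
        ((star U * h0 * U) a b)) = Matrix.single i0 i0 ((lam i0 : ℝ) : ℂ) := by
    ext a b
    rw [Matrix.of_apply, hk0]
    by_cases hab : i0 = a ∧ i0 = b
    · rw [← hab.1, ← hab.2, Matrix.single_apply_same,
        Matrix.single_apply_same, mul_one, hci0]
    · rw [Matrix.single_apply_of_ne (h := hab),
        Matrix.single_apply_of_ne (h := hab), mul_zero]
  have hfrob2 : frobNorm (Mop p h0) = lam i0 := by
    rw [Mop_eq p h0 hp]
    rw [show (hp.1.eigenvectorUnitary : Matrix (Fin n) (Fin n) ℂ) = U from rfl]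
    rw [hmat, frobNorm_conj _ _ hU1, frobNorm_std]
    rw [Complex.norm_real, Real.norm_eq_abs, abs_of_nonneg (hp.eigenvalues_nonneg i0)]
  have hfrob1 : frobNorm h0 = 1 := by
    rw [hh0def, frobNorm_conj _ _ hU1, frobNorm_std]
    simp
  have hle : lam i0 ≤ c := by
    have := hcall h0
    rwa [hfrob2, hfrob1, mul_one] at this
  exact le_trans (opNorm_le_of p hp (lam i0) (hp.eigenvalues_nonneg i0) hi0) hle

/-- For positive semidefinite `p`, the map `M_p(h) = ∫₀¹ p^α h p^{1−α} dα` satisfies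
`‖M_p(h)‖_F ≤ ‖p‖_op ‖h‖_F`, and its operator norm with respect to the Frobenius norm
(i.e. the least constant `c ≥ 0` with `‖M_p(h)‖_F ≤ c ‖h‖_F` for all `h`) equals `‖p‖_op`. -/
theorem Mop_norm_eq_opNorm {n : ℕ} (p : Matrix (Fin n) (Fin n) ℂ) (hp : p.PosSemidef) :
    (∀ h : Matrix (Fin n) (Fin n) ℂ, frobNorm (Mop p h) ≤ opNorm p * frobNorm h) ∧
      sInf {c : ℝ | 0 ≤ c ∧ ∀ h : Matrix (Fin n) (Fin n) ℂ,
        frobNorm (Mop p h) ≤ c * frobNorm h} = opNorm p := by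
  refine ⟨Mop_norm_le p hp, ?_⟩
  have hmem : opNorm p ∈ {c : ℝ | 0 ≤ c ∧ ∀ h : Matrix (Fin n) (Fin n) ℂ,
      frobNorm (Mop p h) ≤ c * frobNorm h} := ⟨norm_nonneg _, Mop_norm_le p hp⟩
  refine le_antisymm (csInf_le ⟨0, fun c hc => hc.1⟩ hmem) ?_
  refine le_csInf ⟨_, hmem⟩ (fun c hc => opNorm_le_of_mem p hp c hc.1 hc.2)
end

section
/- Let p ∈ M_n(ℂ) be positive semidefinite with tr p = 1. Then the supremum over all Hermitian x ∈ M_n(ℂ) of tr(x·p) − log tr(exp x) equals tr(p log p), where exp is the matrix exponential and tr(x·p) is real since x is Hermitian and p positive semidefinite. -/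
open Matrix
open scoped ComplexOrder

attribute [local instance] Matrix.frobeniusNormedRing Matrix.frobeniusNormedAlgebra

/-- `tr(p log p)`: apply `λ ↦ λ log λ` (which takes the value `0` at `λ = 0`, since
`Real.log 0 = 0`) to `p` via the functional calculus and take the (real part of the) trace. -/
noncomputable def trEnt {n : ℕ} (p : Matrix (Fin n) (Fin n) ℂ) : ℝ :=
  (Matrix.trace (hcfc (fun l => l * Real.log l) p)).re

namespace RelEntAux

variable {n : ℕ}

lemma star_mul_self_eq {U : Matrix (Fin n) (Fin n) ℂ} (hU : U ∈ Matrix.unitaryGroup (Fin n) ℂ) :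
    star U * U = 1 := (Matrix.mem_unitaryGroup_iff').mp hU

lemma mul_star_self_eq {U : Matrix (Fin n) (Fin n) ℂ} (hU : U ∈ Matrix.unitaryGroup (Fin n) ℂ) :
    U * star U = 1 := (Matrix.mem_unitaryGroup_iff).mp hU

lemma conj_mul_conj {U : Matrix (Fin n) (Fin n) ℂ} (hU : star U * U = 1)
    (A B : Matrix (Fin n) (Fin n) ℂ) :
    (U * A * star U) * (U * B * star U) = U * (A * B) * star U := by
  calc (U * A * star U) * (U * B * star U) = U * A * (star U * U) * B * star U := by
        simp only [Matrix.mul_assoc]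
      _ = U * (A * B) * star U := by rw [hU]; simp only [Matrix.mul_assoc, Matrix.mul_one]
        
lemma trace_conj (U : Matrix (Fin n) (Fin n) ℂ) (hU : star U * U = 1)
    (A : Matrix (Fin n) (Fin n) ℂ) :
    Matrix.trace (U * A * star U) = Matrix.trace A := by
  rw [Matrix.trace_mul_cycle, hU, Matrix.one_mul]

lemma exp_conj_diag (U : Matrix (Fin n) (Fin n) ℂ) (hU : U ∈ Matrix.unitaryGroup (Fin n) ℂ)
    (c : Fin n → ℝ) :
    NormedSpace.exp (U * Matrix.diagonal (fun i => (c i : ℂ)) * star U)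
      = U * Matrix.diagonal (fun i => (Real.exp (c i) : ℂ)) * star U := by
  set u : (Matrix (Fin n) (Fin n) ℂ)ˣ :=
    ⟨U, star U, mul_star_self_eq hU, star_mul_self_eq hU⟩ with hu
  have h := Matrix.exp_units_conj u (Matrix.diagonal (fun i => (c i : ℂ)))
  have h2 : (↑u⁻¹ : Matrix (Fin n) (Fin n) ℂ) = star U := rfl
  have h3 : (↑u : Matrix (Fin n) (Fin n) ℂ) = U := rfl
  rw [h2, h3] at h
  rw [h, Matrix.exp_diagonal]
  have hd : NormedSpace.exp (fun i => ((c i : ℝ) : ℂ)) = fun i => ((Real.exp (c i) : ℝ) : ℂ) := by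
    funext i
    rw [Pi.coe_exp, ← Complex.exp_eq_exp_ℂ, Complex.ofReal_exp]
  rw [hd]

lemma isHermitian_conj_diag (U : Matrix (Fin n) (Fin n) ℂ) (c : Fin n → ℝ) :
    (U * Matrix.diagonal (fun i => (c i : ℂ)) * star U).IsHermitian := by
  rw [Matrix.star_eq_conjTranspose]
  apply Matrix.isHermitian_mul_mul_conjTranspose
  show _ = _
  rw [Matrix.diagonal_conjTranspose]
  have : (star fun i => ((c i : ℝ) : ℂ)) = fun i => ((c i : ℝ) : ℂ) :=
    funext fun i => Complex.conj_ofReal (c i)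
  rw [this]

lemma re_conj_diag_diag (U : Matrix (Fin n) (Fin n) ℂ) (c : Fin n → ℝ) (i : Fin n) :
    ((U * Matrix.diagonal (fun k => (c k : ℂ)) * star U) i i).re
      = ∑ k, Complex.normSq (U i k) * c k := by
  rw [Matrix.mul_apply]
  rw [Complex.re_sum]
  congr 1
  funext k
  rw [Matrix.mul_diagonal]
  have : U i k * (c k : ℂ) * (star U) k i = ((Complex.normSq (U i k) * c k : ℝ) : ℂ) := by
    have hs : (star U) k i = (starRingEnd ℂ) (U i k) := rfl
    rw [hs]
    push_cast
    rw [← Complex.mul_conj]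
    ring
  rw [this, Complex.ofReal_re]

lemma row_normSq_sum (U : Matrix (Fin n) (Fin n) ℂ) (hU : U * star U = 1) (i : Fin n) :
    ∑ k, Complex.normSq (U i k) = 1 := by
  have h := congrFun (congrFun hU i) i
  rw [Matrix.mul_apply] at h
  have h1 : ((1 : Matrix (Fin n) (Fin n) ℂ) i i) = 1 := Matrix.one_apply_eq i
  rw [h1] at h
  have := congrArg Complex.re h
  rw [Complex.re_sum, Complex.one_re] at this
  rw [← this]
  congr 1
  funext k
  have hs : (star U) k i = (starRingEnd ℂ) (U i k) := rfl
  rw [hs, Complex.mul_conj, Complex.ofReal_re]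
lemma re_trace (A : Matrix (Fin n) (Fin n) ℂ) :
    (Matrix.trace A).re = ∑ i, (A i i).re := by
  rw [Matrix.trace, Complex.re_sum]; rfl

lemma core (l d t : Fin n → ℝ) (hl : ∀ i, 0 ≤ l i) (hsum : ∑ i, l i = 1)
    (ht : ∀ i, Real.exp (d i) ≤ t i) :
    ∑ i, l i * d i - ∑ i, l i * Real.log (l i) ≤ Real.log (∑ i, t i) := by
  have hne : (Finset.univ : Finset (Fin n)).Nonempty := by
    by_contra h
    rw [Finset.not_nonempty_iff_eq_empty] at h
    rw [h, Finset.sum_empty] at hsum; norm_num at hsum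
  set T := ∑ i, t i with hT
  have hexple : ∑ i, Real.exp (d i) ≤ T := Finset.sum_le_sum (fun i _ => ht i)
  have hTpos : 0 < T := by
    have : 0 < ∑ i, Real.exp (d i) := Finset.sum_pos (fun i _ => Real.exp_pos _) hne
    linarith
  have key : ∀ i, l i * (d i - Real.log T - Real.log (l i)) ≤ Real.exp (d i) / T - l i := by
    intro i
    rcases eq_or_lt_of_le (hl i) with h0 | h0
    · rw [← h0]; simp; positivity
    · have h1 : d i - Real.log T - Real.log (l i)
          ≤ Real.exp (d i - Real.log T - Real.log (l i)) - 1 := by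
        linarith [Real.add_one_le_exp (d i - Real.log T - Real.log (l i))]
      have h2 : Real.exp (d i - Real.log T - Real.log (l i)) = Real.exp (d i) / T / l i := by
        rw [Real.exp_sub, Real.exp_sub, Real.exp_log hTpos, Real.exp_log h0]
      rw [h2] at h1
      have h3 := mul_le_mul_of_nonneg_left h1 (le_of_lt h0)
      calc l i * (d i - Real.log T - Real.log (l i))
          ≤ l i * (Real.exp (d i) / T / l i - 1) := h3
        _ = Real.exp (d i) / T - l i := by field_simp
  have hsum2 : ∑ i, l i * (d i - Real.log T - Real.log (l i))
      ≤ ∑ i, (Real.exp (d i) / T - l i) := Finset.sum_le_sum (fun i _ => key i)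
  have hrhs : ∑ i, (Real.exp (d i) / T - l i) ≤ 0 := by
    rw [Finset.sum_sub_distrib, hsum, ← Finset.sum_div]
    have : (∑ i, Real.exp (d i)) / T ≤ 1 := by rw [div_le_one hTpos]; exact hexple
    linarith
  have hlhs : ∑ i, l i * (d i - Real.log T - Real.log (l i))
      = ∑ i, l i * d i - Real.log T - ∑ i, l i * Real.log (l i) := by
    simp only [mul_sub]
    rw [Finset.sum_sub_distrib, Finset.sum_sub_distrib, ← Finset.sum_mul, hsum, one_mul]
  rw [hlhs] at hsum2
  linarith

lemma peierls (q : Matrix (Fin n) (Fin n) ℂ) (hq : q.IsHermitian) (i : Fin n) :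
    Real.exp ((q i i).re) ≤ ((NormedSpace.exp q) i i).re := by
  set V := (hq.eigenvectorUnitary : Matrix (Fin n) (Fin n) ℂ) with hV
  have hVmem : V ∈ Matrix.unitaryGroup (Fin n) ℂ := hq.eigenvectorUnitary.2
  have hspec : q = V * Matrix.diagonal (fun k => ((hq.eigenvalues k : ℝ) : ℂ)) * star V :=
    hq.spectral_theorem
  have hexp : NormedSpace.exp q
      = V * Matrix.diagonal (fun k => ((Real.exp (hq.eigenvalues k) : ℝ) : ℂ)) * star V := by
    conv_lhs => rw [hspec]
    exact exp_conj_diag V hVmem _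
  have hd : (q i i).re = ∑ k, Complex.normSq (V i k) * hq.eigenvalues k := by
    conv_lhs => rw [hspec]
    exact re_conj_diag_diag V _ i
  have htt : ((NormedSpace.exp q) i i).re
      = ∑ k, Complex.normSq (V i k) * Real.exp (hq.eigenvalues k) := by
    rw [hexp]; exact re_conj_diag_diag V _ i
  rw [hd, htt]
  have hw0 : ∀ k ∈ Finset.univ, 0 ≤ Complex.normSq (V i k) := fun k _ => Complex.normSq_nonneg _
  have hw1 : ∑ k, Complex.normSq (V i k) = 1 := row_normSq_sum V (mul_star_self_eq hVmem) i
  have := convexOn_exp.map_sum_le (p := hq.eigenvalues) hw0 hw1 (fun k _ => Set.mem_univ _)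
  simpa [smul_eq_mul] using this

end RelEntAux

/-- Petz's variational formula: for a density matrix `p`, the supremum over Hermitian `x` of
`tr(x·p) − log tr(exp x)` equals `tr(p log p)`.  Here `exp` is the matrix exponential, and
`tr(x·p)` and `tr(exp x)` are real (their real parts are taken). -/
theorem relativeEntropy_variational {n : ℕ} (p : Matrix (Fin n) (Fin n) ℂ)
    (hp : p.PosSemidef) (htr : Matrix.trace p = 1) :
    IsLUB {r : ℝ | ∃ x : Matrix (Fin n) (Fin n) ℂ, x.IsHermitian ∧
        r = (Matrix.trace (x * p)).re - Real.log (Matrix.trace (NormedSpace.exp x)).re}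
      (trEnt p) := by
  have hherm := hp.1
  set U := (hherm.eigenvectorUnitary : Matrix (Fin n) (Fin n) ℂ) with hU
  have hUmem : U ∈ Matrix.unitaryGroup (Fin n) ℂ := hherm.eigenvectorUnitary.2
  have hU1 : star U * U = 1 := RelEntAux.star_mul_self_eq hUmem
  have hU2 : U * star U = 1 := RelEntAux.mul_star_self_eq hUmem
  set l := hherm.eigenvalues with hleig
  have hspec : p = U * Matrix.diagonal (fun k => ((l k : ℝ) : ℂ)) * star U :=
    hherm.spectral_theorem
  have hl0 : ∀ i, 0 ≤ l i := fun i => hp.eigenvalues_nonneg i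
  have hsum : ∑ i, l i = 1 := by
    have h1 : Matrix.trace p = ((∑ i, l i : ℝ) : ℂ) := by
      rw [hspec, RelEntAux.trace_conj U hU1, Matrix.trace_diagonal]
      push_cast
      rfl
    rw [htr] at h1
    exact_mod_cast h1.symm
  have hEnt : trEnt p = ∑ i, l i * Real.log (l i) := by
    unfold trEnt hcfc
    rw [dif_pos hherm, ← hU]
    rw [RelEntAux.trace_conj U hU1, Matrix.trace_diagonal, Complex.re_sum]
    simp [hleig]
  constructor
  · rintro r ⟨x, hx, rfl⟩
    set q := star U * x * U with hqdef
    have hq : q.IsHermitian := by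
      rw [hqdef, Matrix.star_eq_conjTranspose]
      exact Matrix.isHermitian_conjTranspose_mul_mul U hx
    have hxq : x = U * q * star U := by
      rw [hqdef]
      have h : U * (star U * x * U) * star U = (U * star U) * x * (U * star U) := by
        simp only [Matrix.mul_assoc]
      rw [h, hU2, Matrix.one_mul, Matrix.mul_one]
    have htrx : (Matrix.trace (x * p)).re = ∑ i, l i * (q i i).re := by
      have h1 : x * p = U * (q * Matrix.diagonal (fun k => ((l k : ℝ) : ℂ))) * star U := by
        conv_lhs => rw [hxq, hspec]
        exact RelEntAux.conj_mul_conj hU1 _ _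
      rw [h1, RelEntAux.trace_conj U hU1, RelEntAux.re_trace]
      apply Finset.sum_congr rfl
      intro i _
      rw [Matrix.mul_diagonal]
      simp [Complex.mul_re, mul_comm]
    have htre : (Matrix.trace (NormedSpace.exp x)).re
        = ∑ i, ((NormedSpace.exp q) i i).re := by
      have h1 : NormedSpace.exp x = U * NormedSpace.exp q * star U := by
        conv_lhs => rw [hxq]
        exact Matrix.exp_units_conj ⟨U, star U, hU2, hU1⟩ q
      rw [h1, RelEntAux.trace_conj U hU1, RelEntAux.re_trace]
    rw [htrx, htre, hEnt]
    have := RelEntAux.core l (fun i => (q i i).re) (fun i => ((NormedSpace.exp q) i i).re)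
      hl0 hsum (fun i => RelEntAux.peierls q hq i)
    linarith
  · intro b hbub
    have key : ∀ ε : ℝ, 0 < ε → trEnt p ≤ b + Real.log (1 + (n : ℝ) * ε) := by
      intro ε hε
      set g : Fin n → ℝ := fun i => Real.log (max (l i) ε) with hg
      set xe := U * Matrix.diagonal (fun i => ((g i : ℝ) : ℂ)) * star U with hxe
      have hxeH : xe.IsHermitian := RelEntAux.isHermitian_conj_diag U g
      have hmpos : ∀ i, 0 < max (l i) ε := fun i => lt_of_lt_of_le hε (le_max_right _ _)
      have hval1 : (Matrix.trace (xe * p)).re = ∑ i, g i * l i := by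
        have h1 : xe * p = U * (Matrix.diagonal (fun i => ((g i : ℝ) : ℂ))
            * Matrix.diagonal (fun k => ((l k : ℝ) : ℂ))) * star U := by
          conv_lhs => rw [hxe, hspec]
          exact RelEntAux.conj_mul_conj hU1 _ _
        rw [h1, Matrix.diagonal_mul_diagonal, RelEntAux.trace_conj U hU1,
          Matrix.trace_diagonal, Complex.re_sum]
        apply Finset.sum_congr rfl
        intro i _
        simp [Complex.mul_re]
      have hval2 : (Matrix.trace (NormedSpace.exp xe)).re = ∑ i, max (l i) ε := by
        rw [hxe, RelEntAux.exp_conj_diag U hUmem g]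
        have h2 : (fun i => ((Real.exp (g i) : ℝ) : ℂ)) = fun i => ((max (l i) ε : ℝ) : ℂ) := by
          funext i
          rw [hg]
          simp only []
          rw [Real.exp_log (hmpos i)]
        rw [h2, RelEntAux.trace_conj U hU1, Matrix.trace_diagonal, Complex.re_sum]
        simp
      have hle : (∑ i, g i * l i) - Real.log (∑ i, max (l i) ε) ≤ b :=
        hbub ⟨xe, hxeH, by rw [hval1, hval2]⟩
      have hS1 : (1 : ℝ) ≤ ∑ i, max (l i) ε := by
        rw [← hsum]
        exact Finset.sum_le_sum fun i _ => le_max_left _ _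
      have hS2 : ∑ i, max (l i) ε ≤ 1 + (n : ℝ) * ε := by
        have hle2 : ∀ i ∈ Finset.univ, max (l i) ε ≤ l i + ε :=
          fun i _ => max_le (le_add_of_nonneg_right hε.le) (le_add_of_nonneg_left (hl0 i))
        calc ∑ i, max (l i) ε ≤ ∑ i, (l i + ε) := Finset.sum_le_sum hle2
          _ = 1 + (n : ℝ) * ε := by
            rw [Finset.sum_add_distrib, hsum, Finset.sum_const, Finset.card_univ,
              Fintype.card_fin, nsmul_eq_mul]
      have hE1 : ∑ i, l i * Real.log (l i) ≤ ∑ i, g i * l i := by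
        apply Finset.sum_le_sum
        intro i _
        rcases eq_or_lt_of_le (hl0 i) with h0 | h0
        · rw [← h0]; simp
        · have hlog2 : Real.log (l i) ≤ Real.log (max (l i) ε) :=
            Real.log_le_log h0 (le_max_left _ _)
          calc l i * Real.log (l i) ≤ l i * Real.log (max (l i) ε) :=
                mul_le_mul_of_nonneg_left hlog2 (hl0 i)
            _ = g i * l i := by rw [hg]; ring
      have hlog : Real.log (∑ i, max (l i) ε) ≤ Real.log (1 + (n : ℝ) * ε) :=
        Real.log_le_log (by linarith) hS2
      rw [hEnt]
      linarith
    have hcont : ContinuousAt (fun ε : ℝ => b + Real.log (1 + (n : ℝ) * ε)) 0 := by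
      apply ContinuousAt.add continuousAt_const
      have h1 : ContinuousAt (fun ε : ℝ => 1 + (n : ℝ) * ε) 0 := by fun_prop
      exact h1.log (by norm_num)
    have hlim : Filter.Tendsto (fun ε : ℝ => b + Real.log (1 + (n : ℝ) * ε))
        (nhdsWithin 0 (Set.Ioi 0)) (nhds b) := by
      have h3 := hcont.tendsto
      have hv : b + Real.log (1 + (n : ℝ) * 0) = b := by norm_num
      rw [hv] at h3
      exact h3.mono_left nhdsWithin_le_nhds
    refine ge_of_tendsto hlim ?_
    filter_upwards [self_mem_nhdsWithin] with ε hε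
    exact key ε hε
end

section
/- Let ∂ : M_n(ℂ) → 𝓗 be a symmetric gradient and Δ := ∂*∂ (a positive semidefinite self-adjoint operator on M_n(ℂ) with Δ(1) = 0, since ∂(1) = 0). Assume e^{−tΔ} is positivity preserving for every t ≥ 0. Then e^{−tΔ} is positivity improving — for every nonzero positive semidefinite x ∈ M_n(ℂ) and every t > 0 the matrix e^{−tΔ}(x) is positive definite — if and only if ker Δ = ℂ·1, i.e. the identity matrix spans the kernel of Δ. -/
open Matrix
open scoped Nat
open scoped ComplexOrder

attribute [local instance] Matrix.frobeniusNormedAddCommGroup Matrix.frobeniusNormedSpace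

/-- The exponential of a linear endomorphism of the matrix algebra. -/
noncomputable def expEnd {n : ℕ}
    (T : Matrix (Fin n) (Fin n) ℂ →ₗ[ℂ] Matrix (Fin n) (Fin n) ℂ) :
    Matrix (Fin n) (Fin n) ℂ →ₗ[ℂ] Matrix (Fin n) (Fin n) ℂ :=
  haveI : IsTopologicalRing (Matrix (Fin n) (Fin n) ℂ →L[ℂ] Matrix (Fin n) (Fin n) ℂ) :=
    @NonUnitalSeminormedRing.toIsTopologicalRing _
      ContinuousLinearMap.toNormedRing.toNonUnitalNormedRing.toNonUnitalSeminormedRing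
  (NormedSpace.exp (LinearMap.toContinuousLinearMap T)).toLinearMap

instance instTopRingCLMMat {n : ℕ} :
    IsTopologicalRing (Matrix (Fin n) (Fin n) ℂ →L[ℂ] Matrix (Fin n) (Fin n) ℂ) :=
  @NonUnitalSeminormedRing.toIsTopologicalRing _
    ContinuousLinearMap.toNormedRing.toNonUnitalNormedRing.toNonUnitalSeminormedRing

namespace HeatAux

/-- The exponential fixes vectors killed by the operator. -/
lemma exp_apply_eq_self {𝕂 : Type*} [RCLike 𝕂] {E : Type*} [NormedAddCommGroup E]
    [NormedSpace 𝕂 E] [CompleteSpace E] (A : E →L[𝕂] E) {z : E} (hz : A z = 0) :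
    NormedSpace.exp A z = z := by
  have hsum : Summable fun k : ℕ => (k !⁻¹ : 𝕂) • A ^ k := NormedSpace.expSeries_summable' A
  have h1 : NormedSpace.exp A z = ∑' k : ℕ, ((k !⁻¹ : 𝕂) • A ^ k) z := by
    rw [NormedSpace.exp_eq_tsum 𝕂]
    exact ((ContinuousLinearMap.apply 𝕂 E z).map_tsum hsum)
  rw [h1, tsum_eq_single 0 ?_]
  · simp
  · intro k hk
    obtain ⟨j, rfl⟩ := Nat.exists_eq_succ_of_ne_zero hk
    rw [ContinuousLinearMap.smul_apply, pow_succ, ContinuousLinearMap.mul_apply, hz,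
      map_zero, smul_zero]

lemma exp_smul_apply_eq_zero {E : Type*} [NormedAddCommGroup E] [NormedSpace ℂ E]
    [CompleteSpace E] (B : E →L[ℂ] E) (t : ℝ) {x : E}
    (h1 : (NormedSpace.exp (t • B)) x = 0) : x = 0 := by
  have hnb : (-t) • B = -(t • B) := by
    ext z
    simp only [ContinuousLinearMap.smul_apply, ContinuousLinearMap.neg_apply, neg_smul]
  have hcomm : Commute ((-t) • B) (t • B) := by
    rw [hnb]
    exact (Commute.refl (t • B)).neg_left
  have h2 : NormedSpace.exp ((-t) • B) * NormedSpace.exp (t • B) = 1 := by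
    rw [← NormedSpace.exp_add_of_commute_of_mem_ball (𝕂 := ℂ) hcomm
      ((NormedSpace.expSeries_radius_eq_top ℂ (E →L[ℂ] E)).symm ▸ edist_lt_top _ _)
      ((NormedSpace.expSeries_radius_eq_top ℂ (E →L[ℂ] E)).symm ▸ edist_lt_top _ _)]
    rw [show (-t) • B + t • B = 0 by rw [hnb]; exact neg_add_cancel _]
    exact NormedSpace.exp_zero
  have h3 : x = NormedSpace.exp ((-t) • B) ((NormedSpace.exp (t • B)) x) := by
    rw [← ContinuousLinearMap.mul_apply, h2, ContinuousLinearMap.one_apply]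
  rw [h1, map_zero] at h3
  exact h3

lemma hasDerivAt_exp_smul_apply {E : Type*} [NormedAddCommGroup E] [NormedSpace ℂ E]
    [CompleteSpace E] (B : E →L[ℂ] E) (x : E) (t : ℝ) :
    HasDerivAt (fun u : ℝ => (NormedSpace.exp (u • B)) x)
      ((B * NormedSpace.exp (t • B)) x) t := by
  have h1 : HasDerivAt (fun u : ℝ => NormedSpace.exp (u • B))
      (B * NormedSpace.exp (t • B)) t := hasDerivAt_exp_smul_const' B t
  exact ((ContinuousLinearMap.apply ℂ E x).restrictScalars ℝ).hasFDerivAt.comp_hasDerivAt t h1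

lemma trace_vecMulVec_mul {n : ℕ} (v w : Fin n → ℂ) (A : Matrix (Fin n) (Fin n) ℂ) :
    Matrix.trace (Matrix.vecMulVec v w * A) = w ⬝ᵥ (A *ᵥ v) := by
  simp only [Matrix.trace, Matrix.diag, Matrix.mul_apply, Matrix.vecMulVec_apply,
    Matrix.mulVec, dotProduct]
  rw [Finset.sum_comm]
  congr 1
  ext k
  rw [Finset.mul_sum]
  congr 1
  ext i
  ring

lemma star_vecMulVec_star {n : ℕ} (v : Fin n → ℂ) :
    star (Matrix.vecMulVec v (star v)) = Matrix.vecMulVec v (star v) := by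
  ext i j
  simp [Matrix.star_apply, Matrix.vecMulVec_apply, mul_comm]

lemma re_dot_star_self_nonneg {n : ℕ} (w : Fin n → ℂ) : 0 ≤ (star w ⬝ᵥ w).re := by
  have h : (0:ℂ) ≤ star w ⬝ᵥ w := dotProduct_star_self_nonneg w
  exact (Complex.le_def.mp h).1

lemma eq_zero_of_re_dot_star_self {n : ℕ} {w : Fin n → ℂ} (h : (star w ⬝ᵥ w).re = 0) :
    w = 0 := by
  have him : (star w ⬝ᵥ w).im = 0 := by
    have h0 : (0:ℂ) ≤ star w ⬝ᵥ w := dotProduct_star_self_nonneg w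
    exact ((Complex.le_def.mp h0).2).symm
  have : star w ⬝ᵥ w = 0 := Complex.ext h him
  exact dotProduct_star_self_eq_zero.mp this

end HeatAux
namespace HeatAux2
open HeatAux

variable {n m : ℕ}

/-- Kato-type identity: if `c` is hermitian with `c *ᵥ η = 0`, then
`η* Δ(c²) η = -2 Σ_k ‖∂_k(c) η‖²`. -/
lemma kato_identity
    (D : Matrix (Fin n) (Fin n) ℂ →ₗ[ℂ] (Fin m → Matrix (Fin n) (Fin n) ℂ))
    (hLeib : ∀ (k : Fin m) (a b : Matrix (Fin n) (Fin n) ℂ),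
      D (a * b) k = D a k * b + a * D b k)
    (hSym : ∀ (k : Fin m) (a : Matrix (Fin n) (Fin n) ℂ), D (star a) k = star (D a k))
    (Dadj : (Fin m → Matrix (Fin n) (Fin n) ℂ) →ₗ[ℂ] Matrix (Fin n) (Fin n) ℂ)
    (hAdj : ∀ (a : Matrix (Fin n) (Fin n) ℂ) (h : Fin m → Matrix (Fin n) (Fin n) ℂ),
      (∑ k, Matrix.trace (star (D a k) * h k)) = Matrix.trace (star a * Dadj h))
    (c : Matrix (Fin n) (Fin n) ℂ) (hc : star c = c)
    (η : Fin n → ℂ) (hcη : c *ᵥ η = 0) :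
    star η ⬝ᵥ ((Dadj (D (c * c))) *ᵥ η)
      = -2 * ∑ k, star ((D c k) *ᵥ η) ⬝ᵥ ((D c k) *ᵥ η) := by
  classical
  set e : Matrix (Fin n) (Fin n) ℂ := Matrix.vecMulVec η (star η) with he_def
  have he : star e = e := star_vecMulVec_star η
  -- c * e = 0 and e * c = 0
  have hce : c * e = 0 := by
    ext i j
    simp only [Matrix.mul_apply, he_def, Matrix.vecMulVec_apply, Matrix.zero_apply]
    have h1 : ∑ k, c i k * (η k * star η j) = (∑ k, c i k * η k) * star η j := by
      rw [Finset.sum_mul]; congr 1; ext k; ring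
    rw [h1]
    have h2 : (∑ k, c i k * η k) = (c *ᵥ η) i := rfl
    rw [h2, hcη]
    simp
  have hec : e * c = 0 := by
    have h3 : star (c * e) = e * c := by rw [StarMul.star_mul, he, hc]
    rw [← h3, hce, star_zero]
  -- Leibniz consequences
  have hDce : ∀ k, D c k * e + c * D e k = 0 := by
    intro k
    have h4 := (hLeib k c e).symm
    rw [hce] at h4
    rw [h4, map_zero]
    rfl
  have hDec : ∀ k, D e k * c + e * D c k = 0 := by
    intro k
    have h5 := (hLeib k e c).symm
    rw [hec] at h5
    rw [h5, map_zero]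
    rfl
  -- the trace identity from hAdj
  have hmain : Matrix.trace (star e * Dadj (D (c * c)))
      = ∑ k, Matrix.trace (star (D e k) * D (c * c) k) := (hAdj e (D (c * c))).symm
  have hgoal1 : star η ⬝ᵥ ((Dadj (D (c * c))) *ᵥ η)
      = Matrix.trace (star e * Dadj (D (c * c))) := by
    rw [he, ← trace_vecMulVec_mul η (star η) (Dadj (D (c * c)))]
  rw [hgoal1, hmain]
  -- now compute each summand
  have hterm : ∀ k, Matrix.trace (star (D e k) * D (c * c) k)
      = -2 * (star ((D c k) *ᵥ η) ⬝ᵥ ((D c k) *ᵥ η)) := by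
    intro k
    have hE : star (D e k) = D e k := by rw [← hSym k e, he]
    have hA : star (D c k) = D c k := by rw [← hSym k c, hc]
    set A := D c k with hA_def
    set E := D e k with hE_def
    have hcE : c * E = -(A * e) := eq_neg_of_add_eq_zero_right (hDce k)
    have hEc : E * c = -(e * A) := eq_neg_of_add_eq_zero_left (hDec k)
    have hLeib2 : D (c * c) k = A * c + c * A := hLeib k c c
    rw [hE, hLeib2, mul_add, Matrix.trace_add]
    have ht2 : Matrix.trace (E * (c * A)) = -Matrix.trace (e * (A * A)) := by
      rw [← Matrix.mul_assoc, hEc, Matrix.neg_mul, Matrix.trace_neg, Matrix.mul_assoc]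
    have ht1 : Matrix.trace (E * (A * c)) = -Matrix.trace (e * (A * A)) := by
      rw [← Matrix.mul_assoc, Matrix.trace_mul_comm (E * A) c, ← Matrix.mul_assoc, hcE,
        Matrix.neg_mul, Matrix.trace_neg, Matrix.trace_mul_comm (A * e) A,
        ← Matrix.mul_assoc, Matrix.trace_mul_comm (A * A) e]
    rw [ht1, ht2]
    have hdot : Matrix.trace (e * (A * A)) = star ((A) *ᵥ η) ⬝ᵥ ((A) *ᵥ η) := by
      rw [he_def, trace_vecMulVec_mul η (star η) (A * A)]
      rw [Matrix.star_mulVec, ← Matrix.mulVec_mulVec]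
      rw [dotProduct_mulVec (star η) ]
      congr 1
      rw [← Matrix.star_eq_conjTranspose, hA]
    rw [hdot]
    ring
  rw [Finset.sum_congr rfl (fun k _ => hterm k), ← Finset.mul_sum]

end HeatAux2
namespace HeatAux3

variable {n : ℕ}

/-- Support projection of a hermitian matrix. -/
lemma exists_support_proj {y : Matrix (Fin n) (Fin n) ℂ} (hy : y.IsHermitian) :
    ∃ p : Matrix (Fin n) (Fin n) ℂ, star p = p ∧ p * p = p ∧ y * p = y ∧
      ∀ v : Fin n → ℂ, y *ᵥ v = 0 → p *ᵥ v = 0 := by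
  classical
  set U : Matrix (Fin n) (Fin n) ℂ := (hy.eigenvectorUnitary : Matrix (Fin n) (Fin n) ℂ) with hU_def
  have hUmem := hy.eigenvectorUnitary.2
  have hU1 : star U * U = 1 := (Unitary.mem_iff.mp hUmem).1
  have hU2 : U * star U = 1 := (Unitary.mem_iff.mp hUmem).2
  set d := hy.eigenvalues with hd_def
  set E : Matrix (Fin n) (Fin n) ℂ :=
    Matrix.diagonal (fun i => if d i = 0 then (0:ℂ) else 1) with hE_def
  have hspec : y = U * Matrix.diagonal (RCLike.ofReal ∘ d) * star U := hy.spectral_theorem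
  refine ⟨U * E * star U, ?_, ?_, ?_, ?_⟩
  · rw [StarMul.star_mul, StarMul.star_mul, star_star]
    have hEstar : star E = E := by
      rw [hE_def, Matrix.star_eq_conjTranspose, Matrix.diagonal_conjTranspose]
      exact congrArg Matrix.diagonal (funext fun i => by by_cases h : d i = 0 <;> simp [h])
    rw [hEstar, Matrix.mul_assoc]
  · have hEE : E * E = E := by
      rw [hE_def, Matrix.diagonal_mul_diagonal]
      exact congrArg Matrix.diagonal (funext fun i => by by_cases h : d i = 0 <;> simp [h])
    calc U * E * star U * (U * E * star U)
        = U * E * (star U * U) * E * star U := by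
          simp only [Matrix.mul_assoc]
      _ = U * (E * E) * star U := by rw [hU1]; simp only [Matrix.mul_assoc, Matrix.one_mul]
      _ = U * E * star U := by rw [hEE, Matrix.mul_assoc]
  · have hDE : Matrix.diagonal (RCLike.ofReal ∘ d) * E = Matrix.diagonal (RCLike.ofReal ∘ d) := by
      rw [hE_def, Matrix.diagonal_mul_diagonal]
      exact congrArg Matrix.diagonal (funext fun i => by
        by_cases h : d i = 0 <;> simp [h, Function.comp])
    calc y * (U * E * star U) = U * Matrix.diagonal (RCLike.ofReal ∘ d) * (star U * U)
          * E * star U := by rw [hspec]; simp only [Matrix.mul_assoc]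
      _ = U * (Matrix.diagonal (RCLike.ofReal ∘ d) * E) * star U := by
          rw [hU1]; simp only [Matrix.mul_assoc, Matrix.mul_one, Matrix.one_mul]
      _ = y := by rw [hDE]; exact hspec.symm
  · intro v hv
    have h1 : Matrix.diagonal (RCLike.ofReal ∘ d) *ᵥ (star U *ᵥ v) = 0 := by
      rw [Matrix.mulVec_mulVec]
      have : Matrix.diagonal (RCLike.ofReal ∘ d) * star U = star U * y := by
        rw [hspec]
        calc Matrix.diagonal (RCLike.ofReal ∘ d) * star U
            = (star U * U) * Matrix.diagonal (RCLike.ofReal ∘ d) * star U := by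
              rw [hU1, Matrix.one_mul]
          _ = star U * (U * Matrix.diagonal (RCLike.ofReal ∘ d) * star U) := by
              simp only [Matrix.mul_assoc]
      rw [this, ← Matrix.mulVec_mulVec, hv, Matrix.mulVec_zero]
    have h2 : E *ᵥ (star U *ᵥ v) = 0 := by
      funext i
      have h1i := congrFun h1 i
      rw [Matrix.mulVec_diagonal] at h1i ⊢
      by_cases h : d i = 0
      · simp [h]
      · simp only [h, if_false, Pi.zero_apply, one_mul]
        have hdi : (RCLike.ofReal (d i) : ℂ) ≠ 0 := by
          simp only [RCLike.ofReal_ne_zero]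
          exact h
        have := mul_eq_zero.mp h1i
        simp only [Pi.zero_apply] at h1i
        rcases mul_eq_zero.mp h1i with h' | h'
        · exact absurd h' hdi
        · exact h'
    calc (U * E * star U) *ᵥ v = U *ᵥ (E *ᵥ (star U *ᵥ v)) := by
          simp only [Matrix.mulVec_mulVec, Matrix.mul_assoc]
      _ = 0 := by rw [h2, Matrix.mulVec_zero]

/-- Shift a hermitian matrix by its least eigenvalue: get a PSD matrix with nontrivial kernel. -/
lemma exists_shift_psd (hn : 0 < n) {h : Matrix (Fin n) (Fin n) ℂ} (hh : h.IsHermitian) :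
    ∃ (l : ℝ) (v : Fin n → ℂ), v ≠ 0 ∧ (h - (l : ℂ) • 1).PosSemidef ∧
      (h - (l : ℂ) • 1) *ᵥ v = 0 := by
  classical
  haveI : Nonempty (Fin n) := Fin.pos_iff_nonempty.mp hn
  set U : Matrix (Fin n) (Fin n) ℂ := (hh.eigenvectorUnitary : Matrix (Fin n) (Fin n) ℂ) with hU_def
  have hUmem := hh.eigenvectorUnitary.2
  have hU1 : star U * U = 1 := (Unitary.mem_iff.mp hUmem).1
  have hU2 : U * star U = 1 := (Unitary.mem_iff.mp hUmem).2
  set d := hh.eigenvalues with hd_def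
  have hspec : h = U * Matrix.diagonal (RCLike.ofReal ∘ d) * star U := hh.spectral_theorem
  set l : ℝ := Finset.univ.inf' Finset.univ_nonempty d with hl_def
  obtain ⟨i0, -, hi0⟩ := Finset.exists_mem_eq_inf' Finset.univ_nonempty d
  have hkey : h - (l : ℂ) • 1 = U * Matrix.diagonal (fun i => ((d i - l : ℝ) : ℂ)) * star U := by
    have hdiag : Matrix.diagonal (fun i => ((d i - l : ℝ) : ℂ))
        = Matrix.diagonal (RCLike.ofReal ∘ d) - (l : ℂ) • 1 := by
      rw [Matrix.smul_one_eq_diagonal, Matrix.diagonal_sub]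
      refine congrArg Matrix.diagonal (funext fun i => ?_)
      show (RCLike.ofReal (d i - l) : ℂ) = RCLike.ofReal (d i) - RCLike.ofReal l
      rw [RCLike.ofReal_sub]
    rw [hdiag, Matrix.mul_sub, Matrix.sub_mul, ← hspec]
    congr 1
    rw [Matrix.mul_smul, Matrix.mul_one, Matrix.smul_mul, hU2]
  refine ⟨l, fun i => U i i0, ?_, ?_, ?_⟩
  · intro hv0
    have h1 : (star U * U) i0 i0 = 1 := by rw [hU1, Matrix.one_apply_eq]
    rw [Matrix.mul_apply] at h1
    have : ∀ k, (star U) i0 k * U k i0 = 0 := by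
      intro k
      have : U k i0 = 0 := congrFun hv0 k
      rw [this, mul_zero]
    rw [Finset.sum_congr rfl (fun k _ => this k), Finset.sum_const_zero] at h1
    exact zero_ne_one h1
  · rw [hkey]
    have hP : (Matrix.diagonal (fun i => ((d i - l : ℝ) : ℂ))).PosSemidef := by
      refine Matrix.PosSemidef.diagonal ?_
      intro i
      simp only [Pi.zero_apply]
      rw [show (0:ℂ) = ((0:ℝ):ℂ) by norm_num, Complex.real_le_real, sub_nonneg]
      exact Finset.inf'_le d (Finset.mem_univ i)
    have := hP.mul_mul_conjTranspose_same U
    rwa [← Matrix.star_eq_conjTranspose] at this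
  · have hw : star U *ᵥ (fun i => U i i0) = Pi.single i0 1 := by
      funext i
      have : (star U *ᵥ fun i => U i i0) i = (star U * U) i i0 := by
        rw [Matrix.mul_apply]
        rfl
      rw [this, hU1, Matrix.one_apply, Pi.single_apply]
    rw [hkey]
    rw [show (U * Matrix.diagonal (fun i => ((d i - l : ℝ) : ℂ)) * star U) *ᵥ (fun i => U i i0)
        = U *ᵥ (Matrix.diagonal (fun i => ((d i - l : ℝ) : ℂ)) *ᵥ (star U *ᵥ (fun i => U i i0)))
      by simp only [Matrix.mulVec_mulVec, Matrix.mul_assoc]]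
    rw [hw, Matrix.diagonal_mulVec_single]
    have hli0 : l = d i0 := hl_def.trans hi0
    have : ((d i0 - l : ℝ) : ℂ) = 0 := by
      simp [hli0]
    simp [this]

end HeatAux3
namespace HeatAux4
open HeatAux

variable {n : ℕ}

lemma toCLM_neg_smul (Δ : Matrix (Fin n) (Fin n) ℂ →ₗ[ℂ] Matrix (Fin n) (Fin n) ℂ) (s : ℝ) :
    LinearMap.toContinuousLinearMap ((-s) • Δ)
      = s • (-(LinearMap.toContinuousLinearMap Δ)) := by
  ext x
  simp only [LinearMap.coe_toContinuousLinearMap', LinearMap.smul_apply,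
    ContinuousLinearMap.smul_apply, ContinuousLinearMap.neg_apply,
    LinearMap.coe_toContinuousLinearMap', smul_neg, neg_smul]

lemma expEnd_eq (Δ : Matrix (Fin n) (Fin n) ℂ →ₗ[ℂ] Matrix (Fin n) (Fin n) ℂ) (s : ℝ)
    (x : Matrix (Fin n) (Fin n) ℂ) :
    expEnd ((-s) • Δ) x
      = (NormedSpace.exp (s • (-(LinearMap.toContinuousLinearMap Δ)))) x := by
  unfold expEnd
  rw [toCLM_neg_smul]
  rw [ContinuousLinearMap.coe_coe]

lemma expEnd_fixes (Δ : Matrix (Fin n) (Fin n) ℂ →ₗ[ℂ] Matrix (Fin n) (Fin n) ℂ)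
    {z : Matrix (Fin n) (Fin n) ℂ} (hz : Δ z = 0) (t : ℝ) :
    expEnd ((-t) • Δ) z = z := by
  unfold expEnd
  rw [ContinuousLinearMap.coe_coe]
  apply exp_apply_eq_self
  change ((-t) • Δ) z = 0
  rw [LinearMap.smul_apply, hz, smul_zero]

lemma expEnd_eq_zero_iff (Δ : Matrix (Fin n) (Fin n) ℂ →ₗ[ℂ] Matrix (Fin n) (Fin n) ℂ)
    (t : ℝ) {x : Matrix (Fin n) (Fin n) ℂ} (h : expEnd ((-t) • Δ) x = 0) : x = 0 := by
  set B := -(LinearMap.toContinuousLinearMap Δ) with hB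
  have h1 : (NormedSpace.exp (t • B)) x = 0 := by
    rw [← expEnd_eq]; exact h
  exact exp_smul_apply_eq_zero B t h1

end HeatAux4
namespace HeatAux5

lemma eq_zero_of_trace_star_mul_self {n : ℕ} {A : Matrix (Fin n) (Fin n) ℂ}
    (h : Matrix.trace (star A * A) = 0) : A = 0 := by
  have hexp : (Matrix.trace (star A * A)).re = ∑ j, ∑ i, Complex.normSq (A i j) := by
    rw [Matrix.trace, Complex.re_sum]
    apply Finset.sum_congr rfl; intro j _
    rw [Matrix.diag_apply, Matrix.mul_apply, Complex.re_sum]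
    apply Finset.sum_congr rfl; intro i _
    rw [Matrix.star_eq_conjTranspose, Matrix.conjTranspose_apply, Complex.star_def,
      ← Complex.normSq_eq_conj_mul_self]
    rfl
  rw [h, Complex.zero_re] at hexp
  have hall : ∀ j ∈ Finset.univ, ∀ i ∈ (Finset.univ : Finset (Fin n)),
      Complex.normSq (A i j) = 0 := by
    have h1 := (Finset.sum_eq_zero_iff_of_nonneg (fun j _ =>
      Finset.sum_nonneg (fun i _ => Complex.normSq_nonneg (A i j)))).mp hexp.symm
    intro j hj i hi
    exact (Finset.sum_eq_zero_iff_of_nonneg (fun i _ => Complex.normSq_nonneg (A i j))).mp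
      (h1 j hj) i hi
  ext i j
  exact Complex.normSq_eq_zero.mp (hall j (Finset.mem_univ j) i (Finset.mem_univ i))

open scoped MatrixOrder in
lemma exists_psd_sqrt {n : ℕ} {y : Matrix (Fin n) (Fin n) ℂ} (hy : y.PosSemidef) :
    ∃ c : Matrix (Fin n) (Fin n) ℂ, c.PosSemidef ∧ c * c = y :=
  ⟨CFC.sqrt y, (CFC.sqrt_nonneg y).posSemidef, CFC.sqrt_mul_sqrt_self y hy.nonneg⟩

end HeatAux5
set_option maxHeartbeats 2000000 in
open HeatAux HeatAux2 HeatAux3 HeatAux4 HeatAux5 in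
/-- Let `∂` be a symmetric gradient on `M_n(ℂ)` with adjoint `∂*` (w.r.t. the Frobenius inner
product `⟨a,b⟩ = tr(a†b)`) and `Δ = ∂*∂`.  If `e^{−tΔ}` is positivity preserving for all
`t ≥ 0`, then it is positivity improving if and only if the kernel of `Δ` is spanned by the
identity matrix. -/
theorem heat_positivity_improving_iff_ker_eq_span_one {n m : ℕ}
    (D : Matrix (Fin n) (Fin n) ℂ →ₗ[ℂ] (Fin m → Matrix (Fin n) (Fin n) ℂ))
    (hLeib : ∀ (k : Fin m) (a b : Matrix (Fin n) (Fin n) ℂ),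
      D (a * b) k = D a k * b + a * D b k)
    (hSym : ∀ (k : Fin m) (a : Matrix (Fin n) (Fin n) ℂ), D (star a) k = star (D a k))
    (Dadj : (Fin m → Matrix (Fin n) (Fin n) ℂ) →ₗ[ℂ] Matrix (Fin n) (Fin n) ℂ)
    (hAdj : ∀ (a : Matrix (Fin n) (Fin n) ℂ) (h : Fin m → Matrix (Fin n) (Fin n) ℂ),
      (∑ k, Matrix.trace (star (D a k) * h k)) = Matrix.trace (star a * Dadj h))
    (hpp : ∀ t : ℝ, 0 ≤ t → ∀ x : Matrix (Fin n) (Fin n) ℂ, x.PosSemidef →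
      (expEnd ((-t) • (Dadj ∘ₗ D)) x).PosSemidef) :
    (∀ x : Matrix (Fin n) (Fin n) ℂ, x.PosSemidef → x ≠ 0 →
        ∀ t : ℝ, 0 < t → (expEnd ((-t) • (Dadj ∘ₗ D)) x).PosDef) ↔
      LinearMap.ker (Dadj ∘ₗ D) = Submodule.span ℂ {(1 : Matrix (Fin n) (Fin n) ℂ)} := by
  classical
  rcases Nat.eq_zero_or_pos n with hn0 | hn
  · subst hn0
    have hz0 : ∀ z : Matrix (Fin 0) (Fin 0) ℂ, z = 0 := fun z => by
      ext i j; exact i.elim0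
    constructor
    · intro _
      apply le_antisymm
      · intro w _
        rw [hz0 w]; exact Submodule.zero_mem _
      · intro w _
        exact LinearMap.mem_ker.mpr (hz0 _)
    · intro _ x _ hx0
      exact absurd (hz0 x) hx0
  -- facts used by both directions
  have hD1 : D 1 = 0 := by
    funext k
    have h := hLeib k 1 1
    rw [Matrix.mul_one, Matrix.mul_one, Matrix.one_mul] at h
    exact right_eq_add.mp h
  have hΔ1 : (Dadj ∘ₗ D) 1 = 0 := by
    rw [LinearMap.comp_apply, hD1, map_zero]
  constructor
  · -- improving → ker = span
    intro himp
    -- Δ commutes with star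
    have hstarΔ : ∀ z, (Dadj ∘ₗ D) (star z) = star ((Dadj ∘ₗ D) z) := by
      intro z
      have tr_eq : ∀ b : Matrix (Fin n) (Fin n) ℂ,
          Matrix.trace (star b * ((Dadj ∘ₗ D) (star z) - star ((Dadj ∘ₗ D) z))) = 0 := by
        intro b
        rw [Matrix.mul_sub, Matrix.trace_sub]
        have t1 : Matrix.trace (star b * (Dadj ∘ₗ D) (star z))
            = ∑ k, Matrix.trace (star (D b k) * D (star z) k) :=
          (hAdj b (D (star z))).symm
        have t1' : ∑ k, Matrix.trace (star (D b k) * D (star z) k)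
            = ∑ k, star (Matrix.trace (D z k * D b k)) := by
          apply Finset.sum_congr rfl; intro k _
          rw [hSym k z, ← StarMul.star_mul, Matrix.star_eq_conjTranspose,
            Matrix.trace_conjTranspose]
        have t2 : Matrix.trace (star b * star ((Dadj ∘ₗ D) z))
            = star (Matrix.trace ((Dadj ∘ₗ D) z * b)) := by
          rw [← StarMul.star_mul, Matrix.star_eq_conjTranspose, Matrix.trace_conjTranspose]
        have t3 : Matrix.trace ((Dadj ∘ₗ D) z * b) = ∑ k, Matrix.trace (D z k * D b k) := by
          rw [Matrix.trace_mul_comm, LinearMap.comp_apply]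
          have h4 := (hAdj (star b) (D z)).symm
          rw [star_star] at h4
          rw [h4]
          apply Finset.sum_congr rfl; intro k _
          rw [hSym k b, star_star, Matrix.trace_mul_comm]
        rw [t1, t1', t2, t3, ← star_sum]
        exact sub_self _
      have hw := tr_eq ((Dadj ∘ₗ D) (star z) - star ((Dadj ∘ₗ D) z))
      have := eq_zero_of_trace_star_mul_self hw
      rw [sub_eq_zero] at this
      exact this
    -- hermitian elements of the kernel are multiples of 1
    have key : ∀ w : Matrix (Fin n) (Fin n) ℂ, (Dadj ∘ₗ D) w = 0 → star w = w →
        ∃ μ : ℝ, w = (μ : ℂ) • 1 := by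
      intro w hw hwst
      have hh : w.IsHermitian := by
        rw [Matrix.IsHermitian, ← Matrix.star_eq_conjTranspose]; exact hwst
      obtain ⟨l, v, hv0, hpsd, hkerv⟩ := exists_shift_psd hn hh
      by_cases hx0 : w - (l : ℂ) • 1 = 0
      · exact ⟨l, (sub_eq_zero.mp hx0)⟩
      · exfalso
        have hkerx : (Dadj ∘ₗ D) (w - (l : ℂ) • 1) = 0 := by
          rw [map_sub, _root_.map_smul, hw, hΔ1, smul_zero, sub_self]
        have hfix := expEnd_fixes (Dadj ∘ₗ D) hkerx 1
        have hpd := himp _ hpsd hx0 1 one_pos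
        rw [hfix] at hpd
        have hcontr := hpd.dotProduct_mulVec_pos hv0
        rw [hkerv, dotProduct_zero] at hcontr
        exact lt_irrefl 0 hcontr
    apply le_antisymm
    · intro z hz
      have hz' : (Dadj ∘ₗ D) z = 0 := LinearMap.mem_ker.mp hz
      have hzs : (Dadj ∘ₗ D) (star z) = 0 := by rw [hstarΔ z, hz', star_zero]
      obtain ⟨μ1, hμ1⟩ := key (z + star z)
        (by rw [map_add, hz', hzs, add_zero])
        (by rw [star_add, star_star, add_comm])
      obtain ⟨μ2, hμ2⟩ := key (Complex.I • (star z - z))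
        (by rw [_root_.map_smul, map_sub, hzs, hz', sub_self, smul_zero])
        (by rw [star_smul, star_sub, star_star, Complex.star_def, Complex.conj_I,
          neg_smul, ← smul_neg, neg_sub])
      refine Submodule.mem_span_singleton.mpr ⟨((μ1 : ℂ) + Complex.I * μ2) / 2, ?_⟩
      have e2' : star z - z = (-Complex.I * μ2) • (1 : Matrix (Fin n) (Fin n) ℂ) := by
        have h5 := congrArg (fun w => (-Complex.I) • w) hμ2
        simp only [smul_smul] at h5
        rw [show -Complex.I * Complex.I = 1 by rw [neg_mul, Complex.I_mul_I, neg_neg],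
          one_smul] at h5
        rw [h5]
      have h2z : (2 : ℂ) • z = ((μ1 : ℂ) - -Complex.I * μ2) • (1 : Matrix (Fin n) (Fin n) ℂ) := by
        have hc : (2 : ℂ) • z = (z + star z) - (star z - z) := by
          rw [two_smul]; abel
        rw [hc, hμ1, e2', ← sub_smul]
      have h6 := congrArg (fun w => (2⁻¹ : ℂ) • w) h2z
      simp only [smul_smul] at h6
      rw [show (2⁻¹ : ℂ) * 2 = 1 by norm_num, one_smul] at h6
      rw [h6]
      congr 1
      ring
    · rw [Submodule.span_le]
      intro w hw
      rw [Set.mem_singleton_iff] at hw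
      subst hw
      exact LinearMap.mem_ker.mpr hΔ1
  · -- ker = span → improving
    intro hker x hx hx0 t ht
    set Δ : Matrix (Fin n) (Fin n) ℂ →ₗ[ℂ] Matrix (Fin n) (Fin n) ℂ := Dadj ∘ₗ D with hΔdef
    set y : Matrix (Fin n) (Fin n) ℂ := expEnd ((-t) • Δ) x with hy_def
    have hy : y.PosSemidef := hpp t ht.le x hx
    have hy0 : y ≠ 0 := fun h0 => hx0 (expEnd_eq_zero_iff Δ t h0)
    obtain ⟨c, hcps, hcc⟩ := exists_psd_sqrt hy
    have hcherm : star c = c := by rw [Matrix.star_eq_conjTranspose]; exact hcps.1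
    have hdot_c : ∀ v, star v ⬝ᵥ (y *ᵥ v) = 0 → c *ᵥ v = 0 := by
      intro v hv
      have hdot : star (c *ᵥ v) ⬝ᵥ (c *ᵥ v) = star v ⬝ᵥ (y *ᵥ v) := by
        rw [Matrix.star_mulVec, ← dotProduct_mulVec, Matrix.mulVec_mulVec,
          ← Matrix.star_eq_conjTranspose, hcherm, hcc]
      rw [hv] at hdot
      exact dotProduct_star_self_eq_zero.mp hdot
    have hker_c : ∀ v, y *ᵥ v = 0 → c *ᵥ v = 0 := by
      intro v hv
      exact hdot_c v (by rw [hv, dotProduct_zero])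
    -- the analytic core: ∂c kills the kernel of y
    have hDc_ker : ∀ η, y *ᵥ η = 0 → ∀ k, (D c k) *ᵥ η = 0 := by
      intro η hη
      set B : Matrix (Fin n) (Fin n) ℂ →L[ℂ] Matrix (Fin n) (Fin n) ℂ :=
        -(LinearMap.toContinuousLinearMap Δ) with hB_def
      set ψ : Matrix (Fin n) (Fin n) ℂ →ₗ[ℂ] ℂ :=
        { toFun := fun z => star η ⬝ᵥ (z *ᵥ η),
          map_add' := by
            intro a b
            rw [Matrix.add_mulVec, dotProduct_add]
          map_smul' := by
            intro a b
            rw [Matrix.smul_mulVec, dotProduct_smul]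
            rfl } with hψ_def
      set χ : Matrix (Fin n) (Fin n) ℂ →L[ℝ] ℝ :=
        Complex.reCLM.comp ((LinearMap.toContinuousLinearMap ψ).restrictScalars ℝ) with hχ_def
      have hχ_apply : ∀ z, χ z = (star η ⬝ᵥ (z *ᵥ η)).re := by
        intro z
        rw [hχ_def]
        rfl
      have hyx : (NormedSpace.exp (t • B)) x = y := by
        rw [hy_def, expEnd_eq Δ t x, ← hB_def]
      set g : ℝ → ℝ := fun s => χ ((NormedSpace.exp (s • B)) x) with hg_def
      have hgt : g t = 0 := by
        show χ ((NormedSpace.exp (t • B)) x) = 0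
        rw [hyx, hχ_apply, hη, dotProduct_zero, Complex.zero_re]
      have hgs : ∀ s, 0 < s → 0 ≤ g s := by
        intro s hs
        show 0 ≤ χ ((NormedSpace.exp (s • B)) x)
        rw [hB_def, ← expEnd_eq Δ s x, hχ_apply]
        exact (Complex.le_def.mp ((hpp s hs.le x hx).dotProduct_mulVec_nonneg η)).1
      have hmin : IsLocalMin g t := by
        have : ∀ᶠ s in nhds t, g t ≤ g s := by
          filter_upwards [Ioi_mem_nhds ht] with s hs
          rw [hgt]
          exact hgs s hs
        exact this
      have hd : HasDerivAt g (χ ((B * NormedSpace.exp (t • B)) x)) t := by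
        have h2 : HasDerivAt (fun u : ℝ => (NormedSpace.exp (u • B)) x)
            ((B * NormedSpace.exp (t • B)) x) t :=
          hasDerivAt_exp_smul_apply B x t
        exact χ.hasFDerivAt.comp_hasDerivAt t h2
      have hder0 : χ ((B * NormedSpace.exp (t • B)) x) = 0 :=
        hmin.hasDerivAt_eq_zero hd
      have hBy : (B * NormedSpace.exp (t • B)) x = -(Δ y) := by
        rw [ContinuousLinearMap.mul_apply, hyx, hB_def]
        rw [ContinuousLinearMap.neg_apply, LinearMap.coe_toContinuousLinearMap']
      rw [hBy, hχ_apply, Matrix.neg_mulVec, dotProduct_neg, Complex.neg_re,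
        neg_eq_zero] at hder0
      -- Kato identity
      have hkato := kato_identity D hLeib hSym Dadj hAdj c hcherm η (hker_c η hη)
      rw [hcc] at hkato
      have hΔy : Δ y = Dadj (D y) := rfl
      rw [hΔy, hkato] at hder0
      have hreS : (∑ k, star ((D c k) *ᵥ η) ⬝ᵥ ((D c k) *ᵥ η)).re = 0 := by
        set S := ∑ k, star ((D c k) *ᵥ η) ⬝ᵥ ((D c k) *ᵥ η) with hS_def
        have : ((-2 : ℂ) * S).re = -2 * S.re := by
          simp [Complex.mul_re]
        rw [this] at hder0
        linarith
      rw [Complex.re_sum] at hreS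
      intro k
      have hzero := (Finset.sum_eq_zero_iff_of_nonneg
        (fun k _ => re_dot_star_self_nonneg ((D c k) *ᵥ η))).mp hreS k (Finset.mem_univ k)
      exact eq_zero_of_re_dot_star_self hzero
    -- support projection argument
    obtain ⟨p, hpstar, hpp2, hyp, hpker⟩ := exists_support_proj hy.1
    have matzero : ∀ Mm : Matrix (Fin n) (Fin n) ℂ, (∀ v, Mm *ᵥ v = 0) → Mm = 0 := by
      intro Mm hMm
      ext i j
      have h7 := congrFun (hMm (Pi.single j 1)) i
      rw [Matrix.mulVec_single] at h7
      simpa using h7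
    have hyp1 : y * (1 - p) = 0 := by rw [Matrix.mul_sub, Matrix.mul_one, hyp, sub_self]
    have hcol : ∀ v, y *ᵥ ((1 - p) *ᵥ v) = 0 := by
      intro v; rw [Matrix.mulVec_mulVec, hyp1, Matrix.zero_mulVec]
    have hcp' : c * p = c := by
      have hcp : c * (1 - p) = 0 := by
        apply matzero
        intro v
        rw [← Matrix.mulVec_mulVec]
        exact hker_c _ (hcol v)
      rw [Matrix.mul_sub, Matrix.mul_one, sub_eq_zero] at hcp
      exact hcp.symm
    have hAp' : ∀ k, (D c k) * p = D c k := by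
      intro k
      have hAp : (D c k) * (1 - p) = 0 := by
        apply matzero
        intro v
        rw [← Matrix.mulVec_mulVec]
        exact hDc_ker _ (hcol v) k
      rw [Matrix.mul_sub, Matrix.mul_one, sub_eq_zero] at hAp
      exact hAp.symm
    have hcDp : ∀ k, c * (D p k) = 0 := by
      intro k
      have hl := hLeib k c p
      rw [hcp', hAp' k] at hl
      exact (left_eq_add.mp hl)
    have hpDp : ∀ k, p * (D p k) = 0 := by
      intro k
      apply matzero; intro v
      rw [← Matrix.mulVec_mulVec]
      apply hpker
      rw [Matrix.mulVec_mulVec]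
      have h8 : y * D p k = 0 := by
        rw [← hcc, Matrix.mul_assoc, hcDp k, Matrix.mul_zero]
      rw [h8, Matrix.zero_mulVec]
    have hDpp : ∀ k, (D p k) * p = 0 := by
      intro k
      have hDppstar : star (D p k) = D p k := by rw [← hSym k p, hpstar]
      have h9 : star (p * D p k) = D p k * p := by
        rw [StarMul.star_mul, hDppstar, hpstar]
      rw [← h9, hpDp k, star_zero]
    have hDp0 : D p = 0 := by
      funext k
      have hl := hLeib k p p
      rw [hpp2, hDpp k, hpDp k, add_zero] at hl
      exact hl
    have hΔp : Δ p = 0 := by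
      show Dadj (D p) = 0
      rw [hDp0, map_zero]
    have hpmem : p ∈ LinearMap.ker Δ := LinearMap.mem_ker.mpr hΔp
    rw [hker] at hpmem
    obtain ⟨α, hα⟩ := Submodule.mem_span_singleton.mp hpmem
    have hc0 : c ≠ 0 := fun h0 => hy0 (by rw [← hcc, h0, Matrix.mul_zero])
    have hα1 : α = 1 := by
      by_contra hne
      have h1 : c * (α • (1 : Matrix (Fin n) (Fin n) ℂ)) = α • c := by
        rw [Matrix.mul_smul, Matrix.mul_one]
      have h2 : α • c = c := by rw [← h1, hα, hcp']
      have h3 : (α - 1) • c = 0 := by rw [sub_smul, one_smul, h2, sub_self]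
      rcases smul_eq_zero.mp h3 with h4 | h4
      · exact hne (sub_eq_zero.mp h4)
      · exact hc0 h4
    have hp1 : p = 1 := by rw [← hα, hα1, one_smul]
    refine Matrix.PosDef.of_dotProduct_mulVec_pos hy.1 (fun v hv => ?_)
    rcases lt_or_eq_of_le (hy.dotProduct_mulVec_nonneg v) with hlt | heq
    · exact hlt
    · exfalso
      apply hv
      have hcv : c *ᵥ v = 0 := hdot_c v heq.symm
      have hyv : y *ᵥ v = 0 := by
        rw [← hcc, ← Matrix.mulVec_mulVec, hcv, Matrix.mulVec_zero]
      have hpv := hpker v hyv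
      rw [hp1, Matrix.one_mulVec] at hpv
      exact hpv
end

section
/- Let (X, Σ, μ) be a measure space and F : X → M_n(ℂ) a strongly measurable function such that F(x) is positive semidefinite and tr(F(x)²) = 1 for μ-almost every x ∈ X. Then there exists a sequence of simple (finitely-valued measurable) functions S_i : X → M_n(ℂ) such that for every i and μ-almost every x, S_i(x) is positive semidefinite with tr(S_i(x)) = 1, and S_i(x) → F(x)² as i → ∞ for μ-almost every x ∈ X. -/
open Matrix MeasureTheory
open scoped ComplexOrder

private lemma aux_inv_nonneg {c : ℂ} (hc : 0 ≤ c) : 0 ≤ c⁻¹ := by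
  obtain ⟨hre, him⟩ := Complex.le_def.mp hc
  simp only [Complex.zero_re, Complex.zero_im] at hre him
  rw [Complex.le_def]
  constructor
  · simpa only [Complex.inv_re, Complex.zero_re] using
      div_nonneg hre (Complex.normSq_nonneg c)
  · simp [Complex.inv_im, ← him]

private lemma aux_smul_psd {n : ℕ} {c : ℂ} (hc : 0 ≤ c) {A : Matrix (Fin n) (Fin n) ℂ}
    (hA : A.PosSemidef) : (c • A).PosSemidef := by
  have hcs : star c = c := by
    obtain ⟨_, him⟩ := Complex.le_def.mp hc
    simp only [Complex.zero_im] at him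
    rw [Complex.star_def, Complex.conj_eq_iff_im]
    exact him.symm
  constructor
  · unfold Matrix.IsHermitian
    rw [Matrix.conjTranspose_smul, hcs, hA.1]
  · exact (hA.smul hc).2

private lemma aux_trace_nonneg {n : ℕ} {A : Matrix (Fin n) (Fin n) ℂ} (hA : A.PosSemidef) :
    0 ≤ A.trace := by
  exact hA.trace_nonneg

/-- Approximation of a strongly measurable field of positive square roots of density matrices:
if `F : X → M_n(ℂ)` is an a.e. pointwise limit of simple functions with `F(x)` positive
semidefinite and `tr(F(x)²) = 1` a.e., then there are simple functions `S_i`, a.e. valued in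
density matrices (positive semidefinite with unit trace), with `S_i(x) → F(x)²` for a.e. `x`. -/
theorem simple_density_approximation {n : ℕ} {X : Type*} [MeasurableSpace X]
    (μ : Measure X) (F : X → Matrix (Fin n) (Fin n) ℂ)
    (hmeas : ∃ G : ℕ → SimpleFunc X (Matrix (Fin n) (Fin n) ℂ),
      ∀ᵐ x ∂μ, Filter.Tendsto (fun i => G i x) Filter.atTop (nhds (F x)))
    (hpos : ∀ᵐ x ∂μ, (F x).PosSemidef)
    (htr : ∀ᵐ x ∂μ, Matrix.trace (F x * F x) = 1) :
    ∃ S : ℕ → SimpleFunc X (Matrix (Fin n) (Fin n) ℂ),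
      (∀ i, ∀ᵐ x ∂μ, (S i x).PosSemidef ∧ Matrix.trace (S i x) = 1) ∧
      (∀ᵐ x ∂μ, Filter.Tendsto (fun i => S i x) Filter.atTop (nhds (F x * F x))) := by
  obtain ⟨G, hG⟩ := hmeas
  rcases Nat.eq_zero_or_pos n with hn | hn
  · -- degenerate case `n = 0`: the trace hypothesis forces `μ = 0`
    subst hn
    have h0 : μ = 0 := by
      by_contra h
      have : Filter.NeBot (ae μ) := ae_neBot.mpr h
      obtain ⟨x, hx⟩ := htr.exists
      simp [Matrix.trace] at hx
    refine ⟨G, ?_, ?_⟩ <;> simp [h0]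
  · -- main case `0 < n`
    have hne0 : ((n : ℂ)) ≠ 0 := Nat.cast_ne_zero.mpr hn.ne'
    set ψ : Matrix (Fin n) (Fin n) ℂ → Matrix (Fin n) (Fin n) ℂ := fun A =>
      if Matrix.trace (Aᴴ * A) = 0 then (n : ℂ)⁻¹ • 1
      else (Matrix.trace (Aᴴ * A))⁻¹ • (Aᴴ * A) with hψ
    refine ⟨fun i => (G i).map ψ, fun i => ?_, ?_⟩
    · refine Filter.Eventually.of_forall fun x => ?_
      rw [SimpleFunc.map_apply]
      set A := G i x with hA
      by_cases h : Matrix.trace (Aᴴ * A) = 0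
      · have hψA : ψ A = (n : ℂ)⁻¹ • 1 := by rw [hψ]; simp [h]
        rw [hψA]
        have hcn : (0 : ℂ) ≤ (n : ℂ)⁻¹ := by
          rw [show ((n : ℂ))⁻¹ = (((n : ℝ)⁻¹ : ℝ) : ℂ) by push_cast; ring]
          exact Complex.zero_le_real.mpr (inv_nonneg.mpr (Nat.cast_nonneg n))
        refine ⟨aux_smul_psd hcn Matrix.PosSemidef.one, ?_⟩
        rw [Matrix.trace_smul, Matrix.trace_one, smul_eq_mul]
        simp [inv_mul_cancel₀ hne0]
      · have hψA : ψ A = (Matrix.trace (Aᴴ * A))⁻¹ • (Aᴴ * A) := by rw [hψ]; simp [h]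
        rw [hψA]
        have hpsd := Matrix.posSemidef_conjTranspose_mul_self A
        have htn : 0 ≤ Matrix.trace (Aᴴ * A) := aux_trace_nonneg hpsd
        refine ⟨aux_smul_psd (aux_inv_nonneg htn) hpsd, ?_⟩
        rw [Matrix.trace_smul, smul_eq_mul, inv_mul_cancel₀ h]
    · filter_upwards [hG, hpos, htr] with x hx hposx htrx
      have hconj : (F x)ᴴ = F x := hposx.1
      have hcont : Continuous fun A : Matrix (Fin n) (Fin n) ℂ => Aᴴ * A :=
        (continuous_id.matrix_conjTranspose).matrix_mul continuous_id
      have hmul : Filter.Tendsto (fun i => (G i x)ᴴ * (G i x)) Filter.atTop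
          (nhds (F x * F x)) := by
        have := (hcont.tendsto (F x)).comp hx
        simpa [Function.comp_def, hconj] using this
      have htrt : Filter.Tendsto (fun i => Matrix.trace ((G i x)ᴴ * (G i x))) Filter.atTop
          (nhds (1 : ℂ)) := by
        have hct : Continuous fun A : Matrix (Fin n) (Fin n) ℂ => A.trace :=
          Continuous.matrix_trace continuous_id
        have := (hct.tendsto (F x * F x)).comp hmul
        rw [htrx] at this
        simpa [Function.comp_def] using this
      have hne : ∀ᶠ i in Filter.atTop, Matrix.trace ((G i x)ᴴ * (G i x)) ≠ 0 :=
        htrt.eventually_ne one_ne_zero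
      have hlim : Filter.Tendsto
          (fun i => (Matrix.trace ((G i x)ᴴ * (G i x)))⁻¹ • ((G i x)ᴴ * (G i x)))
          Filter.atTop (nhds (F x * F x)) := by
        have := (htrt.inv₀ one_ne_zero).smul hmul
        simpa using this
      refine Filter.Tendsto.congr' ?_ hlim
      filter_upwards [hne] with i hi
      rw [SimpleFunc.map_apply, hψ]
      simp [hi]
end
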